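/- Let h : ℝ × ℝ → ℝ be real-analytic on ℝ² and satisfy h(t, x) = (1/2) h(4t, 2x + t) for all t, x ∈ ℝ. Then there exists a constant c ∈ ℝ such that h(t, x) = c x − (c/2) t for all t, x ∈ ℝ. -/

import Mathlib

open Filter Asymptotics

/-- Any real-analytic solution of `h (t, x) = (1/2) h (4t, 2x + t)` on `ℝ²`
is of the linear form `h (t, x) = c x − (c/2) t`. -/
theorem stmt7 (h : ℝ → ℝ → ℝ)
    (hana : AnalyticOnNhd ℝ (Function.uncurry h) Set.univ)
    (heq : ∀ t x : ℝ, h t x = (1 / 2) * h (4 * t) (2 * x + t)) :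
    ∃ c : ℝ, ∀ t x : ℝ, h t x = c * x - c / 2 * t := by
  have hd : HasFDerivAt (Function.uncurry h)
      (fderiv ℝ (Function.uncurry h) ((0:ℝ), (0:ℝ))) ((0:ℝ), (0:ℝ)) :=
    ((hana ((0:ℝ),(0:ℝ)) trivial).differentiableAt).hasFDerivAt
  set F := fderiv ℝ (Function.uncurry h) ((0:ℝ), (0:ℝ)) with hFdef
  have h00 : h 0 0 = 0 := by
    have := heq 0 0
    simp only [mul_zero, mul_comm] at this
    norm_num at this
    linarith
  refine ⟨F (0, 1), fun t x => ?_⟩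
  -- the backwards orbit
  set a : ℕ → ℝ := fun n => (1/2) * ((1/2:ℝ)^n - (1/4:ℝ)^n) with ha
  set p : ℕ → ℝ × ℝ := fun n => (t * (1/4:ℝ)^n, x * (1/2:ℝ)^n - a n * t) with hp
  have key : ∀ n : ℕ, h t x = 2^n * Function.uncurry h (p n) := by
    intro n
    induction n with
    | zero => simp [hp, ha, Function.uncurry]
    | succ n ih =>
      have e := heq (t * (1/4:ℝ)^(n+1)) (x * (1/2:ℝ)^(n+1) - a (n+1) * t)
      have e1 : 4 * (t * (1/4:ℝ)^(n+1)) = t * (1/4:ℝ)^n := by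
        rw [pow_succ]; ring
      have e2 : 2 * (x * (1/2:ℝ)^(n+1) - a (n+1) * t) + t * (1/4:ℝ)^(n+1)
          = x * (1/2:ℝ)^n - a n * t := by
        simp only [ha, pow_succ]; ring
      rw [e1, e2] at e
      simp only [hp, Function.uncurry] at ih ⊢
      rw [e, pow_succ] at *
      rw [ih]; ring
  -- p n → 0
  have hhalf : Tendsto (fun n : ℕ => (1/2:ℝ)^n) atTop (nhds 0) :=
    tendsto_pow_atTop_nhds_zero_of_lt_one (by norm_num) (by norm_num)
  have hquarter : Tendsto (fun n : ℕ => (1/4:ℝ)^n) atTop (nhds 0) :=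
    tendsto_pow_atTop_nhds_zero_of_lt_one (by norm_num) (by norm_num)
  have hp0 : Tendsto p atTop (nhds ((0:ℝ), (0:ℝ))) := by
    apply Tendsto.prodMk_nhds
    · simpa using hquarter.const_mul t
    · have h1 : Tendsto (fun n : ℕ => x * (1/2:ℝ)^n) atTop (nhds 0) := by
        simpa using hhalf.const_mul x
      have h2 : Tendsto (fun n : ℕ => a n * t) atTop (nhds 0) := by
        have : Tendsto a atTop (nhds 0) := by
          have := (hhalf.sub hquarter).const_mul (1/2:ℝ)
          simpa [ha] using this
        simpa only [zero_mul] using this.mul_const t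
      simpa using h1.sub h2
  -- little-o remainder
  have hR : (fun q : ℝ × ℝ => Function.uncurry h q - F q) =o[nhds ((0:ℝ),(0:ℝ))]
      (fun q : ℝ × ℝ => q) := by
    have := hd.isLittleO
    simpa [Function.uncurry, h00, Prod.mk_zero_zero, map_zero, sub_zero] using this
  have hRo : (fun n : ℕ => Function.uncurry h (p n) - F (p n)) =o[atTop] (fun n => p n) :=
    hR.comp_tendsto hp0
  have hpO : (fun n : ℕ => p n) =O[atTop] (fun n : ℕ => (1/2:ℝ)^n) := by
    refine isBigO_iff.mpr ⟨|t| + |x|, Filter.Eventually.of_forall fun n => ?_⟩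
    have hs : (0:ℝ) ≤ (1/2:ℝ)^n := by positivity
    have hq : (1/4:ℝ)^n ≤ (1/2:ℝ)^n := pow_le_pow_left₀ (by norm_num) (by norm_num) n
    have hq0 : (0:ℝ) ≤ (1/4:ℝ)^n := by positivity
    rw [Prod.norm_def]
    simp only [Real.norm_eq_abs, hp]
    rw [abs_of_nonneg hs]
    apply max_le
    · rw [abs_mul, abs_of_nonneg hq0]
      nlinarith [abs_nonneg t, abs_nonneg x]
    · have h1 : |x * (1/2:ℝ)^n - a n * t| ≤ |x| * (1/2:ℝ)^n + |a n| * |t| := by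
        calc |x * (1/2:ℝ)^n - a n * t| ≤ |x * (1/2:ℝ)^n| + |a n * t| := abs_sub _ _
          _ = |x| * (1/2:ℝ)^n + |a n| * |t| := by
              rw [abs_mul, abs_mul, abs_of_nonneg hs]
      have h2 : |a n| ≤ (1/2:ℝ)^n := by
        rw [ha]
        rw [abs_of_nonneg (by nlinarith)]
        nlinarith
      nlinarith [abs_nonneg t, abs_nonneg x]
  have hRo1 : Tendsto (fun n : ℕ => (2:ℝ)^n * (Function.uncurry h (p n) - F (p n)))
      atTop (nhds 0) := by
    have hbig : (fun n : ℕ => (2:ℝ)^n * (Function.uncurry h (p n) - F (p n))) =o[atTop]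
        (fun n : ℕ => (2:ℝ)^n * (1/2:ℝ)^n) :=
      (isBigO_refl (fun n : ℕ => (2:ℝ)^n) atTop).mul_isLittleO (hRo.trans_isBigO hpO)
    have : (fun n : ℕ => (2:ℝ)^n * (1/2:ℝ)^n) = fun _ : ℕ => (1:ℝ) := by
      funext n; rw [← mul_pow]; norm_num
    rw [this] at hbig
    exact isLittleO_one_iff ℝ |>.mp hbig
  -- linear part
  have hFp : ∀ n : ℕ, (2:ℝ)^n * F (p n)
      = t * (1/2:ℝ)^n * F (1, 0) + (x - (1/2) * (1 - (1/2:ℝ)^n) * t) * F (0, 1) := by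
    intro n
    have hdecomp : p n = (t * (1/4:ℝ)^n) • ((1:ℝ), (0:ℝ))
        + (x * (1/2:ℝ)^n - a n * t) • ((0:ℝ), (1:ℝ)) := by
      simp [hp, Prod.ext_iff]
    rw [hdecomp, map_add, map_smul, map_smul, smul_eq_mul, smul_eq_mul]
    have h24 : (2:ℝ)^n * (1/4:ℝ)^n = (1/2:ℝ)^n := by rw [← mul_pow]; norm_num
    have h22 : (2:ℝ)^n * (1/2:ℝ)^n = 1 := by rw [← mul_pow]; norm_num
    simp only [ha]
    linear_combination (t * F (1,0) + (1/2) * t * F (0,1)) * h24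
      + (x * F (0,1) - (1/2) * t * F (0,1)) * h22
  have hFlim : Tendsto (fun n : ℕ => (2:ℝ)^n * F (p n)) atTop
      (nhds ((x - t/2) * F (0, 1))) := by
    simp only [hFp]
    have l1 : Tendsto (fun n : ℕ => t * (1/2:ℝ)^n * F (1, 0)) atTop (nhds 0) := by
      simpa using (hhalf.const_mul t).mul_const (F (1, 0))
    have l2 : Tendsto (fun n : ℕ => (x - (1/2) * (1 - (1/2:ℝ)^n) * t) * F (0, 1)) atTop
        (nhds ((x - t/2) * F (0, 1))) := by
      have s1 : Tendsto (fun n : ℕ => (1:ℝ) - (1/2:ℝ)^n) atTop (nhds (1 - 0)) :=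
        tendsto_const_nhds.sub hhalf
      have s2 : Tendsto (fun n : ℕ => (1/2) * ((1:ℝ) - (1/2:ℝ)^n) * t) atTop
          (nhds ((1/2) * (1 - 0) * t)) := (s1.const_mul (1/2:ℝ)).mul_const t
      have s3 : Tendsto (fun n : ℕ => x - (1/2) * ((1:ℝ) - (1/2:ℝ)^n) * t) atTop
          (nhds (x - (1/2) * ((1:ℝ) - 0) * t)) := s2.const_sub x
      have e : x - (1/2) * ((1:ℝ) - 0) * t = x - t/2 := by ring
      rw [e] at s3
      exact s3.mul_const (F (0, 1))
    simpa using l1.add l2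
  have htot : Tendsto (fun n : ℕ => (2:ℝ)^n * Function.uncurry h (p n)) atTop
      (nhds ((x - t/2) * F (0, 1))) := by
    have : (fun n : ℕ => (2:ℝ)^n * Function.uncurry h (p n))
        = fun n : ℕ => (2:ℝ)^n * F (p n)
          + (2:ℝ)^n * (Function.uncurry h (p n) - F (p n)) := by
      funext n; ring
    rw [this]
    simpa using hFlim.add hRo1
  have hconst : Tendsto (fun n : ℕ => (2:ℝ)^n * Function.uncurry h (p n)) atTop
      (nhds (h t x)) := by
    have : (fun n : ℕ => (2:ℝ)^n * Function.uncurry h (p n)) = fun _ : ℕ => h t x := by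
      funext n; exact (key n).symm
    rw [this]; exact tendsto_const_nhds
  have := tendsto_nhds_unique hconst htot
  rw [this]; ring
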